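/- A pair (a,b) of positive integers belongs to the SL₂ℕ-orbit of a pair (a₀,b₀) of positive integers if and only if, when running the subtractive Euclidean algorithm starting from (a,b) (repeatedly replacing the larger coordinate by the difference of the two coordinates, as long as the coordinates are distinct and positive), one passes through the pair (a₀,b₀). -/

import Mathlib

open Matrix

/-- The monoid `SL₂ℕ` of 2×2 integer matrices with nonnegative entries
and determinant 1. -/
def SL2N : Set (Matrix (Fin 2) (Fin 2) ℤ) :=
  {A | (∀ i j, 0 ≤ A i j) ∧ A.det = 1}

/-- The `SL₂ℕ`-orbit of a vector. -/
def SL2Norbit (v : Fin 2 → ℤ) : Set (Fin 2 → ℤ) :=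
  {w | ∃ A ∈ SL2N, w = A.mulVec v}

/-- One step of the subtractive Euclidean algorithm: replace the larger
coordinate by the difference, provided both coordinates are positive and distinct. -/
def euclidStep : (ℤ × ℤ) → (ℤ × ℤ) → Prop := fun p q =>
  (0 < p.2 ∧ p.2 < p.1 ∧ q = (p.1 - p.2, p.2)) ∨
  (0 < p.1 ∧ p.1 < p.2 ∧ q = (p.1, p.2 - p.1))

private lemma pos_comb {x y a b : ℤ} (hx : 0 ≤ x) (hy : 0 ≤ y) (hxy : 0 < x + y)
    (ha : 0 < a) (hb : 0 < b) : 0 < x * a + y * b := by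
  have h1 : x ≤ x * a := le_mul_of_one_le_right hx ha
  have h2 : y ≤ y * b := le_mul_of_one_le_right hy hb
  linarith

private lemma euclid_of_sl2 : ∀ n : ℕ, ∀ p q r s : ℤ, 0 ≤ p → 0 ≤ q → 0 ≤ r → 0 ≤ s →
    p * s - q * r = 1 → (p + q + r + s).toNat = n →
    ∀ a₀ b₀ : ℤ, 0 < a₀ → 0 < b₀ →
    Relation.ReflTransGen euclidStep (p * a₀ + q * b₀, r * a₀ + s * b₀) (a₀, b₀) := by
  intro n
  induction n using Nat.strong_induction_on with
  | _ n IH =>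
    intro p q r s hp hq hr hs hdet hsum a₀ b₀ ha₀ hb₀
    by_cases h1 : r ≤ p ∧ s ≤ q ∧ 0 < r + s
    · obtain ⟨hpr, hqs, hrs⟩ := h1
      have hb : 0 < r * a₀ + s * b₀ := pos_comb hr hs hrs ha₀ hb₀
      have hne : ¬ (p = r ∧ q = s) := by
        rintro ⟨e1, e2⟩
        rw [e1, e2] at hdet
        nlinarith [mul_comm r s]
      have hrow : 0 < (p - r) + (q - s) := by omega
      have ha' : 0 < (p - r) * a₀ + (q - s) * b₀ :=
        pos_comb (by omega) (by omega) hrow ha₀ hb₀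
      have step : euclidStep (p * a₀ + q * b₀, r * a₀ + s * b₀)
          ((p - r) * a₀ + (q - s) * b₀, r * a₀ + s * b₀) := by
        left
        refine ⟨hb, show r * a₀ + s * b₀ < p * a₀ + q * b₀ by nlinarith [ha'], ?_⟩
        simp only [Prod.mk.injEq]
        exact ⟨by ring, trivial⟩
      refine Relation.ReflTransGen.head step ?_
      exact IH (p + q).toNat (by omega) (p - r) (q - s) r s (by omega) (by omega) hr hs
        (by ring_nf; ring_nf at hdet; linarith) (by omega) a₀ b₀ ha₀ hb₀
    · by_cases h2 : p ≤ r ∧ q ≤ s ∧ 0 < p + q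
      · obtain ⟨hpr, hqs, hpq⟩ := h2
        have haa : 0 < p * a₀ + q * b₀ := pos_comb hp hq hpq ha₀ hb₀
        have hne : ¬ (r = p ∧ s = q) := by
          rintro ⟨e1, e2⟩
          rw [e1, e2] at hdet
          nlinarith [mul_comm p q]
        have hrow : 0 < (r - p) + (s - q) := by omega
        have hb' : 0 < (r - p) * a₀ + (s - q) * b₀ :=
          pos_comb (by omega) (by omega) hrow ha₀ hb₀
        have step : euclidStep (p * a₀ + q * b₀, r * a₀ + s * b₀)
            (p * a₀ + q * b₀, (r - p) * a₀ + (s - q) * b₀) := by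
          right
          refine ⟨haa, show p * a₀ + q * b₀ < r * a₀ + s * b₀ by nlinarith [hb'], ?_⟩
          simp only [Prod.mk.injEq]
          exact ⟨trivial, by ring⟩
        refine Relation.ReflTransGen.head step ?_
        exact IH (r + s).toNat (by omega) p q (r - p) (s - q) hp hq (by omega) (by omega)
          (by ring_nf; ring_nf at hdet; linarith) (by omega) a₀ b₀ ha₀ hb₀
      · -- show the matrix is the identity
        have hrs : 0 < r + s := by
          rcases (lt_or_ge 0 (r + s)) with h | h
          · exact h
          · exfalso
            have hr0 : r = 0 := by omega
            have hs0 : s = 0 := by omega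
            rw [hr0, hs0] at hdet
            simp at hdet
        have hpq : 0 < p + q := by
          rcases (lt_or_ge 0 (p + q)) with h | h
          · exact h
          · exfalso
            have hp0 : p = 0 := by omega
            have hq0 : q = 0 := by omega
            rw [hp0, hq0] at hdet
            simp at hdet
        have hA : p < r ∨ q < s := by
          by_contra hc
          push_neg at hc
          exact h1 ⟨hc.1, hc.2, hrs⟩
        have hB : r < p ∨ s < q := by
          by_contra hc
          push_neg at hc
          exact h2 ⟨hc.1, hc.2, hpq⟩
        have hid : p = 1 ∧ q = 0 ∧ r = 0 ∧ s = 1 := by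
          rcases hA with hA | hA <;> rcases hB with hB | hB
          · omega
          · -- p < r and s < q : contradiction
            exfalso
            nlinarith [mul_le_mul (by omega : p + 1 ≤ r) (by omega : s + 1 ≤ q)
              (by omega : (0:ℤ) ≤ s + 1) (by omega : (0:ℤ) ≤ r)]
          · -- q < s and r < p : identity
            have hqr : q + r ≤ 0 := by
              nlinarith [mul_le_mul (by omega : r + 1 ≤ p) (by omega : q + 1 ≤ s)
                (by omega : (0:ℤ) ≤ q + 1) (by omega : (0:ℤ) ≤ p)]
            have hq0 : q = 0 := by omega
            have hr0 : r = 0 := by omega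
            rw [hq0, hr0] at hdet
            simp at hdet
            have hp1 : p = 1 := by
              rcases (lt_or_ge p 1) with h | h
              · exfalso; interval_cases p <;> simp_all
              · nlinarith
            refine ⟨hp1, hq0, hr0, ?_⟩
            rw [hp1] at hdet; linarith
          · omega
        obtain ⟨hp1, hq0, hr0, hs1⟩ := hid
        rw [hp1, hq0, hr0, hs1]
        simp only [one_mul, zero_mul, add_zero, zero_add]
        exact Relation.ReflTransGen.refl

private lemma sl2_mul_mem {M A : Matrix (Fin 2) (Fin 2) ℤ}
    (hM : M ∈ SL2N) (hA : A ∈ SL2N) : M * A ∈ SL2N := by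
  refine ⟨fun i j => ?_, by rw [Matrix.det_mul, hM.2, hA.2]; ring⟩
  rw [Matrix.mul_apply]
  exact Finset.sum_nonneg fun k _ => mul_nonneg (hM.1 i k) (hA.1 k j)

private lemma L_mem : !![(1:ℤ),1;0,1] ∈ SL2N := by
  constructor
  · intro i j; fin_cases i <;> fin_cases j <;> norm_num
  · simp [Matrix.det_fin_two_of]

private lemma R_mem : !![(1:ℤ),0;1,1] ∈ SL2N := by
  constructor
  · intro i j; fin_cases i <;> fin_cases j <;> norm_num
  · simp [Matrix.det_fin_two_of]

private lemma orbit_of_euclid {p q : ℤ × ℤ}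
    (h : Relation.ReflTransGen euclidStep p q) :
    ∃ A ∈ SL2N, ![p.1, p.2] = A.mulVec ![q.1, q.2] := by
  induction h using Relation.ReflTransGen.head_induction_on with
  | refl =>
    refine ⟨1, ⟨fun i j => ?_, by simp⟩, by simp⟩
    fin_cases i <;> fin_cases j <;> simp [Matrix.one_apply]
  | head hstep _ ih =>
    obtain ⟨A, hA, hAv⟩ := ih
    rename_i x c _
    rcases hstep with ⟨hpos, hlt, heq⟩ | ⟨hpos, hlt, heq⟩
    · refine ⟨!![(1:ℤ),1;0,1] * A, sl2_mul_mem L_mem hA, ?_⟩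
      rw [← Matrix.mulVec_mulVec, ← hAv]
      funext i
      fin_cases i <;>
        simp [Matrix.mulVec, dotProduct, Fin.sum_univ_two, heq] <;> ring
    · refine ⟨!![(1:ℤ),0;1,1] * A, sl2_mul_mem R_mem hA, ?_⟩
      rw [← Matrix.mulVec_mulVec, ← hAv]
      funext i
      fin_cases i <;>
        simp [Matrix.mulVec, dotProduct, Fin.sum_univ_two, heq] <;> ring

/-- A pair `(a,b)` of positive integers lies in the `SL₂ℕ`-orbit of a pair
`(a₀,b₀)` of positive integers if and only if the subtractive Euclidean algorithm
started at `(a,b)` passes through `(a₀,b₀)`. -/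
theorem sl2n_orbit_iff_euclid (a b a₀ b₀ : ℤ)
    (ha : 0 < a) (hb : 0 < b) (ha₀ : 0 < a₀) (hb₀ : 0 < b₀) :
    (![a, b] ∈ SL2Norbit ![a₀, b₀]) ↔
      Relation.ReflTransGen euclidStep (a, b) (a₀, b₀) := by
  constructor
  · rintro ⟨A, ⟨hA1, hA2⟩, hv⟩
    have hae : a = A 0 0 * a₀ + A 0 1 * b₀ := by
      have := congrFun hv 0
      simpa [Matrix.mulVec, dotProduct, Fin.sum_univ_two] using this
    have hbe : b = A 1 0 * a₀ + A 1 1 * b₀ := by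
      have := congrFun hv 1
      simpa [Matrix.mulVec, dotProduct, Fin.sum_univ_two] using this
    rw [Matrix.det_fin_two] at hA2
    rw [hae, hbe]
    exact euclid_of_sl2 _ (A 0 0) (A 0 1) (A 1 0) (A 1 1)
      (hA1 0 0) (hA1 0 1) (hA1 1 0) (hA1 1 1) hA2 rfl a₀ b₀ ha₀ hb₀
  · intro h
    obtain ⟨A, hA, hv⟩ := orbit_of_euclid h
    exact ⟨A, hA, by simpa using hv⟩
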